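/- Let 1/2 ≤ α < 1 and 0 < t. Define the modulus ω(t) := sup over h ∈ ℝ² with h₁, h₂ ≥ 0 and 0 < |h| ≤ t of the L₂-norm of y ↦ |y|^{-α} − |y+h|^{-α} over Γ_h = { y : y₁, y₂ ≥ 0, 0 < |y| < |h|/M } for fixed M > 2. Then there exist constants c > 0 and T > 0 such that ω(t) ≥ c·t^{1−α} for all 0 < t < T. -/

import Mathlib

open MeasureTheory

open Metric Set
open scoped ENNReal

local notation "E2" => EuclideanSpace ℝ (Fin 2)

-- box volume
lemma aux_box (a : ℝ) :
    volume {y : E2 | 0 < y 0 ∧ y 0 < a ∧ 0 < y 1 ∧ y 1 < a}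
      = ENNReal.ofReal a * ENNReal.ofReal a := by
  have hpre : {y : E2 | 0 < y 0 ∧ y 0 < a ∧ 0 < y 1 ∧ y 1 < a}
      = ((MeasurableEquiv.toLp 2 (Fin 2 → ℝ)).symm) ⁻¹' (Set.univ.pi fun _ => Ioo 0 a) := by
    ext y
    simp [Set.mem_univ_pi, Fin.forall_fin_two, MeasurableEquiv.coe_toLp_symm, and_assoc]
  rw [hpre, (EuclideanSpace.volume_preserving_symm_measurableEquiv_toLp (Fin 2)).measure_preimage
    (MeasurableSet.univ_pi fun _ => measurableSet_Ioo).nullMeasurableSet,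
    volume_pi_pi, Fin.prod_univ_two, Real.volume_Ioo, sub_zero]


lemma aux_fin (α R : ℝ) (hα0 : 0 ≤ α) (hα2 : α < 1) (hR : 0 < R) :
    ∫⁻ y in ball (0 : E2) R, ENNReal.ofReal (‖y‖ ^ (-(2*α))) < ⊤ := by
  classical
  set b : ℕ → ℝ := fun n => R / 2 ^ n with hb
  have hbpos : ∀ n, 0 < b n := fun n => div_pos hR (by positivity)
  set A : ℕ → Set E2 := fun n => {y | b (n+1) ≤ ‖y‖ ∧ ‖y‖ < b n} with hA
  have hAm : ∀ n, MeasurableSet (A n) := fun n =>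
    (measurableSet_le measurable_const measurable_norm).inter
      (measurableSet_lt measurable_norm measurable_const)
  -- cover
  have hcover : ball (0 : E2) R ⊆ {(0 : E2)} ∪ ⋃ n, A n := by
    intro y hy
    rw [mem_ball_zero_iff] at hy
    rcases eq_or_ne y 0 with rfl | hy0
    · exact Or.inl rfl
    have hny : 0 < ‖y‖ := norm_pos_iff.2 hy0
    right
    have hex : ∃ n : ℕ, b (n+1) ≤ ‖y‖ := by
      obtain ⟨n, hn⟩ := pow_unbounded_of_one_lt (R / ‖y‖) one_lt_two
      refine ⟨n, ?_⟩
      rw [hb, div_le_iff₀ (by positivity)]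
      rw [div_lt_iff₀ hny] at hn
      calc R ≤ 2 ^ n * ‖y‖ := hn.le
        _ ≤ ‖y‖ * 2 ^ (n+1) := by
            have h2 : (2:ℝ) ^ n ≤ 2 ^ (n+1) := by
              apply pow_le_pow_right₀ one_le_two (Nat.le_succ n)
            nlinarith
    refine mem_iUnion.2 ⟨Nat.find hex, Nat.find_spec hex, ?_⟩
    rcases Nat.eq_zero_or_eq_succ_pred (Nat.find hex) with h0 | hsucc
    · rw [h0]; simpa [hb] using hy
    · rw [hsucc]
      have hmin := Nat.find_min hex (m := Nat.find hex - 1) (by omega)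
      push_neg at hmin
      simpa [Nat.succ_eq_add_one] using hmin
  -- bound the lintegral
  set g : E2 → ℝ≥0∞ := fun y => ENNReal.ofReal (‖y‖ ^ (-(2*α))) with hg
  have hmono : ∫⁻ y in ball (0 : E2) R, g y ≤
      (∫⁻ y in ({(0:E2)} : Set E2), g y) + ∑' n, ∫⁻ y in A n, g y := by
    refine le_trans (lintegral_mono_set hcover) ?_
    refine le_trans (lintegral_union_le _ _ _) ?_
    exact add_le_add le_rfl (lintegral_iUnion_le _ _)
  have hzero : (∫⁻ y in ({(0:E2)} : Set E2), g y) = 0 := by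
    apply setLIntegral_measure_zero
    simp [measure_singleton]
  -- per-annulus bound
  set B : ℝ≥0∞ := volume (ball (0 : E2) 1) with hB
  have hBfin : B < ⊤ := measure_ball_lt_top
  have hterm : ∀ n, ∫⁻ y in A n, g y ≤
      ENNReal.ofReal ((b (n+1)) ^ (-(2*α))) * (ENNReal.ofReal ((b n) ^ (2:ℕ)) * B) := by
    intro n
    have h1 : ∫⁻ y in A n, g y ≤ ∫⁻ _ in A n, ENNReal.ofReal ((b (n+1)) ^ (-(2*α))) := by
      refine setLIntegral_mono' (hAm n) fun y hy => ?_
      refine ENNReal.ofReal_le_ofReal ?_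
      exact Real.rpow_le_rpow_of_nonpos (hbpos (n+1)) hy.1 (by linarith)
    refine h1.trans ?_
    rw [setLIntegral_const]
    refine mul_le_mul_right ?_ _
    have hsub : A n ⊆ ball (0 : E2) (b n) := fun y hy => mem_ball_zero_iff.2 hy.2
    refine le_trans (measure_mono hsub) ?_
    rw [Measure.addHaar_ball _ _ (hbpos n).le]
    simp [finrank_euclideanSpace_fin, hB]
  -- geometric algebra
  have h2 : (0:ℝ) < 2 := two_pos
  set C : ℝ := R ^ (2:ℕ) * R ^ (-(2*α)) * (2:ℝ) ^ (2*α) with hC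
  set q : ℝ := (2:ℝ) ^ (2*α - 2) with hq
  have hqpos : 0 < q := Real.rpow_pos_of_pos h2 _
  have hq1 : q < 1 := Real.rpow_lt_one_of_one_lt_of_neg one_lt_two (by linarith)
  have key : ∀ n : ℕ, (b (n+1)) ^ (-(2*α)) * (b n) ^ (2:ℕ) = C * q ^ n := by
    intro n
    have hbn : ∀ m : ℕ, b m = R * (2:ℝ) ^ (-(m:ℝ)) := by
      intro m
      rw [hb, Real.rpow_neg h2.le, Real.rpow_natCast]
      ring
    rw [hbn, hbn, Real.mul_rpow hR.le (Real.rpow_nonneg h2.le _), mul_pow,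
      ← Real.rpow_natCast ((2:ℝ) ^ (-((n:ℕ):ℝ))) 2,
      ← Real.rpow_mul h2.le, ← Real.rpow_mul h2.le, hC, hq,
      ← Real.rpow_natCast ((2:ℝ) ^ (2*α - 2)) n, ← Real.rpow_mul h2.le]
    have c1 : (2:ℝ) ^ (-((n+1:ℕ):ℝ) * -(2*α)) * (2:ℝ) ^ (-(n:ℝ) * ((2:ℕ):ℝ))
        = (2:ℝ) ^ (2*α) * (2:ℝ) ^ ((2*α-2) * (n:ℝ)) := by
      rw [← Real.rpow_add h2, ← Real.rpow_add h2]
      congr 1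
      push_cast
      ring
    linear_combination (R ^ (2:ℕ) * R ^ (-(2*α))) * c1
  have hCpos : 0 < C := by rw [hC]; positivity
  have hsum : ∑' n, ∫⁻ y in A n, g y ≤ ENNReal.ofReal C * (1 - ENNReal.ofReal q)⁻¹ * B := by
    have h1 : ∀ n : ℕ, ∫⁻ y in A n, g y ≤ ENNReal.ofReal C * (ENNReal.ofReal q) ^ n * B := by
      intro n
      refine (hterm n).trans_eq ?_
      rw [← mul_assoc, ← ENNReal.ofReal_mul (Real.rpow_nonneg (hbpos _).le _), key n,
        ENNReal.ofReal_mul hCpos.le, ENNReal.ofReal_pow hqpos.le]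
    refine le_trans (ENNReal.tsum_le_tsum h1) ?_
    rw [ENNReal.tsum_mul_right, ENNReal.tsum_mul_left, ENNReal.tsum_geometric]
  have hfin : ENNReal.ofReal C * (1 - ENNReal.ofReal q)⁻¹ * B < ⊤ := by
    refine ENNReal.mul_lt_top (ENNReal.mul_lt_top ENNReal.ofReal_lt_top ?_) hBfin
    rw [ENNReal.inv_lt_top, tsub_pos_iff_lt]
    exact ENNReal.ofReal_lt_one.2 hq1
  calc ∫⁻ y in ball (0 : E2) R, g y
      ≤ (∫⁻ y in ({(0:E2)} : Set E2), g y) + ∑' n, ∫⁻ y in A n, g y := hmono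
    _ = ∑' n, ∫⁻ y in A n, g y := by rw [hzero, zero_add]
    _ ≤ ENNReal.ofReal C * (1 - ENNReal.ofReal q)⁻¹ * B := hsum
    _ < ⊤ := hfin


lemma aux_norm (y : E2) : ‖y‖ = Real.sqrt (y 0 ^ 2 + y 1 ^ 2) := by
  rw [EuclideanSpace.norm_eq]
  simp [Fin.sum_univ_two, Real.norm_eq_abs, sq_abs]

lemma aux_mono (y h : E2) (hy0 : 0 ≤ y 0) (hy1 : 0 ≤ y 1) (hh0 : 0 ≤ h 0) (hh1 : 0 ≤ h 1) :
    ‖y‖ ≤ ‖y + h‖ := by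
  have e0 : (y + h) 0 = y 0 + h 0 := rfl
  have e1 : (y + h) 1 = y 1 + h 1 := rfl
  rw [aux_norm, aux_norm, e0, e1]
  apply Real.sqrt_le_sqrt
  nlinarith

lemma aux_meas (c : ℝ) :
    MeasurableSet {y : E2 | 0 ≤ y 0 ∧ 0 ≤ y 1 ∧ 0 < ‖y‖ ∧ ‖y‖ < c} := by
  have : {y : E2 | 0 ≤ y 0 ∧ 0 ≤ y 1 ∧ 0 < ‖y‖ ∧ ‖y‖ < c}
      = {y : E2 | 0 ≤ y 0} ∩ ({y | 0 ≤ y 1} ∩ ({y | 0 < ‖y‖} ∩ {y | ‖y‖ < c})) := rfl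
  rw [this]
  have m0 : Measurable fun y : E2 => y 0 := (measurable_pi_apply 0).comp (WithLp.measurable_ofLp 2 _)
  have m1 : Measurable fun y : E2 => y 1 := (measurable_pi_apply 1).comp (WithLp.measurable_ofLp 2 _)
  have mn : Measurable fun y : E2 => ‖y‖ := measurable_norm
  exact (measurableSet_le measurable_const m0).inter
    ((measurableSet_le measurable_const m1).inter
      ((measurableSet_lt measurable_const mn).inter
        (measurableSet_lt mn measurable_const)))

lemma aux_rpow_meas (p : ℝ) : Measurable fun x : ℝ => x ^ p := by
  apply measurable_of_measurable_on_compl_singleton 0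
  apply Continuous.measurable
  apply continuousOn_iff_continuous_restrict.1
  exact fun x hx => (Real.continuousAt_rpow_const x p (Or.inl hx)).continuousWithinAt

lemma aux_f_meas (α : ℝ) (h : E2) :
    Measurable fun y : E2 => (‖y‖ ^ (-α) - ‖y + h‖ ^ (-α)) ^ 2 := by
  have mn : Measurable fun y : E2 => ‖y‖ := measurable_norm
  have mn2 : Measurable fun y : E2 => ‖y + h‖ :=
    (continuous_id.add continuous_const).norm.measurable
  exact (((aux_rpow_meas (-α)).comp mn).sub ((aux_rpow_meas (-α)).comp mn2)).pow_const 2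

lemma aux_id (α c : ℝ) (h : E2) :
    (∫ y in {y : E2 | 0 ≤ y 0 ∧ 0 ≤ y 1 ∧ 0 < ‖y‖ ∧ ‖y‖ < c},
        (‖y‖ ^ (-α) - ‖y + h‖ ^ (-α)) ^ 2)
      = (∫⁻ y in {y : E2 | 0 ≤ y 0 ∧ 0 ≤ y 1 ∧ 0 < ‖y‖ ∧ ‖y‖ < c},
          ENNReal.ofReal ((‖y‖ ^ (-α) - ‖y + h‖ ^ (-α)) ^ 2)).toReal := by
  rw [integral_eq_lintegral_of_nonneg_ae (ae_of_all _ fun y => sq_nonneg _)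
    (aux_f_meas α h).aestronglyMeasurable]

lemma aux_up (α t M : ℝ) (hα0 : 0 < α) (hM0 : 0 < M) (h : E2)
    (hh0 : 0 ≤ h 0) (hh1 : 0 ≤ h 1) (hht : ‖h‖ ≤ t) :
    ∫⁻ y in {y : E2 | 0 ≤ y 0 ∧ 0 ≤ y 1 ∧ 0 < ‖y‖ ∧ ‖y‖ < ‖h‖/M},
        ENNReal.ofReal ((‖y‖ ^ (-α) - ‖y + h‖ ^ (-α)) ^ 2)
      ≤ ∫⁻ y in ball (0:E2) (t/M), ENNReal.ofReal (‖y‖ ^ (-(2*α))) := by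
  refine le_trans (setLIntegral_mono' (g := fun y : E2 => ENNReal.ofReal (‖y‖ ^ (-(2*α)))) (aux_meas _) fun y hy => ?_) ?_
  · apply ENNReal.ofReal_le_ofReal
    have hy0 : 0 < ‖y‖ := hy.2.2.1
    have hle : ‖y‖ ≤ ‖y + h‖ := aux_mono y h hy.1 hy.2.1 hh0 hh1
    have hA : ‖y + h‖ ^ (-α) ≤ ‖y‖ ^ (-α) :=
      Real.rpow_le_rpow_of_nonpos hy0 hle (by linarith)
    have hBnn : (0:ℝ) ≤ ‖y + h‖ ^ (-α) := Real.rpow_nonneg (norm_nonneg _) _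
    have hsq : (‖y‖ ^ (-α) - ‖y + h‖ ^ (-α)) ^ 2 ≤ (‖y‖ ^ (-α)) ^ 2 := by nlinarith
    refine hsq.trans_eq ?_
    rw [← Real.rpow_natCast (‖y‖ ^ (-α)) 2, ← Real.rpow_mul (norm_nonneg y)]
    congr 1
    push_cast
    ring
  · refine lintegral_mono_set fun y hy => ?_
    refine mem_ball_zero_iff.2 (hy.2.2.2.trans_le ?_)
    gcongr

set_option maxHeartbeats 1000000 in
theorem stmt_9 (α M : ℝ) (hα1 : 1/2 ≤ α) (hα2 : α < 1) (hM : 2 < M)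
    (ω : ℝ → ℝ)
    (hω : ∀ t, 0 < t → ω t =
      sSup { v : ℝ | ∃ h : EuclideanSpace ℝ (Fin 2),
        0 ≤ h 0 ∧ 0 ≤ h 1 ∧ 0 < ‖h‖ ∧ ‖h‖ ≤ t ∧
        v = Real.sqrt (∫ y in {y : EuclideanSpace ℝ (Fin 2) |
              0 ≤ y 0 ∧ 0 ≤ y 1 ∧ 0 < ‖y‖ ∧ ‖y‖ < ‖h‖ / M},
              (‖y‖ ^ (-α) - ‖y + h‖ ^ (-α)) ^ 2) }) :
    ∃ c > 0, ∃ T > 0, ∀ t, 0 < t → t < T → c * t ^ (1 - α) ≤ ω t := by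
  have hα0 : (0:ℝ) < α := by linarith
  have hM0 : (0:ℝ) < M := by linarith
  have hMα : (2:ℝ) ^ α < M ^ α := Real.rpow_lt_rpow (by norm_num) hM hα0
  refine ⟨(M ^ α - 2 ^ α) / (2 * M), div_pos (by linarith) (by linarith), 1, one_pos,
    fun t ht _ => ?_⟩
  set c : ℝ := (M ^ α - 2 ^ α) / (2 * M) with hc
  rw [hω t ht]
  set r : ℝ := t / M with hr
  have hrpos : 0 < r := div_pos ht hM0
  set a : ℝ := r / 2 with ha
  have hapos : 0 < a := by positivity
  have hKfin : (∫⁻ y in ball (0:E2) (t/M), ENNReal.ofReal (‖y‖ ^ (-(2*α)))) < ⊤ :=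
    aux_fin α (t/M) hα0.le hα2 (by positivity)
  -- the specific h
  set h₀ : E2 := EuclideanSpace.single 0 t with hh₀
  have hn0 : h₀ 0 = t := by simp [hh₀]
  have hn1 : h₀ 1 = 0 := by simp [hh₀]
  have hnn : ‖h₀‖ = t := by
    rw [hh₀, EuclideanSpace.norm_single]; exact abs_of_pos ht
  -- bounded above
  have hbdd : BddAbove { v : ℝ | ∃ h : EuclideanSpace ℝ (Fin 2),
      0 ≤ h 0 ∧ 0 ≤ h 1 ∧ 0 < ‖h‖ ∧ ‖h‖ ≤ t ∧
      v = Real.sqrt (∫ y in {y : EuclideanSpace ℝ (Fin 2) |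
            0 ≤ y 0 ∧ 0 ≤ y 1 ∧ 0 < ‖y‖ ∧ ‖y‖ < ‖h‖ / M},
            (‖y‖ ^ (-α) - ‖y + h‖ ^ (-α)) ^ 2) } := by
    refine ⟨Real.sqrt (∫⁻ y in ball (0:E2) (t/M),
      ENNReal.ofReal (‖y‖ ^ (-(2*α)))).toReal, ?_⟩
    rintro v ⟨h, hh0, hh1, hhn, hht, rfl⟩
    rw [aux_id]
    exact Real.sqrt_le_sqrt (ENNReal.toReal_mono hKfin.ne
      (aux_up α t M hα0 hM0 h hh0 hh1 hht))
  -- membership of the element built from h₀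
  have hmem : Real.sqrt (∫ y in {y : EuclideanSpace ℝ (Fin 2) |
        0 ≤ y 0 ∧ 0 ≤ y 1 ∧ 0 < ‖y‖ ∧ ‖y‖ < ‖h₀‖ / M},
        (‖y‖ ^ (-α) - ‖y + h₀‖ ^ (-α)) ^ 2) ∈ { v : ℝ | ∃ h : EuclideanSpace ℝ (Fin 2),
      0 ≤ h 0 ∧ 0 ≤ h 1 ∧ 0 < ‖h‖ ∧ ‖h‖ ≤ t ∧
      v = Real.sqrt (∫ y in {y : EuclideanSpace ℝ (Fin 2) |
            0 ≤ y 0 ∧ 0 ≤ y 1 ∧ 0 < ‖y‖ ∧ ‖y‖ < ‖h‖ / M},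
            (‖y‖ ^ (-α) - ‖y + h‖ ^ (-α)) ^ 2) } :=
    ⟨h₀, by rw [hn0]; exact ht.le, by rw [hn1], by rw [hnn]; exact ht,
      by rw [hnn], rfl⟩
  refine le_trans ?_ (le_csSup hbdd hmem)
  -- lower bound for the specific element
  set d : ℝ := (M ^ α - 2 ^ α) * t ^ (-α) with hd
  have hdpos : 0 < d := mul_pos (by linarith) (Real.rpow_pos_of_pos ht _)
  set S : Set E2 := {y | 0 < y 0 ∧ y 0 < a ∧ 0 < y 1 ∧ y 1 < a} with hS
  have hSm : MeasurableSet S := by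
    have m0 : Measurable fun y : E2 => y 0 := (measurable_pi_apply 0).comp (WithLp.measurable_ofLp 2 _)
    have m1 : Measurable fun y : E2 => y 1 := (measurable_pi_apply 1).comp (WithLp.measurable_ofLp 2 _)
    exact (measurableSet_lt measurable_const m0).inter
      ((measurableSet_lt m0 measurable_const).inter
        ((measurableSet_lt measurable_const m1).inter
          (measurableSet_lt m1 measurable_const)))
  have hSsub : S ⊆ {y : E2 | 0 ≤ y 0 ∧ 0 ≤ y 1 ∧ 0 < ‖y‖ ∧ ‖y‖ < ‖h₀‖ / M} := by
    rintro y ⟨h1, h2, h3, h4⟩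
    have hy0 : 0 < ‖y‖ := by
      refine norm_pos_iff.2 fun hz => ?_
      rw [hz] at h1
      simpa using h1
    have hylt : ‖y‖ < r := by
      rw [aux_norm]
      have hlt : y 0 ^ 2 + y 1 ^ 2 < r ^ 2 := by nlinarith
      calc Real.sqrt (y 0 ^ 2 + y 1 ^ 2) < Real.sqrt (r ^ 2) :=
            Real.sqrt_lt_sqrt (by positivity) hlt
        _ = r := Real.sqrt_sq hrpos.le
    exact ⟨h1.le, h3.le, hy0, by rw [hnn]; exact hylt⟩
  -- pointwise lower bound on S
  have hlow : ∀ y ∈ S, d ^ 2 ≤ (‖y‖ ^ (-α) - ‖y + h₀‖ ^ (-α)) ^ 2 := by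
    intro y hy
    obtain ⟨hg1, hg2, hg3, hg4⟩ := hSsub hy
    have hyr : ‖y‖ < r := by rw [hnn] at hg4; exact hg4
    have hA : r ^ (-α) ≤ ‖y‖ ^ (-α) :=
      Real.rpow_le_rpow_of_nonpos hg3 hyr.le (by linarith)
    have hyh : t / 2 ≤ ‖y + h₀‖ := by
      have h5 : ‖h₀‖ - ‖-y‖ ≤ ‖h₀ - -y‖ := norm_sub_norm_le _ _
      rw [norm_neg, sub_neg_eq_add, hnn] at h5
      have h6 : ‖y‖ ≤ t / 2 := by
        refine hyr.le.trans ?_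
        rw [hr, div_le_div_iff₀ hM0 two_pos]
        nlinarith
      have h7 : ‖h₀ + y‖ = ‖y + h₀‖ := by rw [add_comm]
      linarith [h5, h6, h7 ▸ h5]
    have hB : ‖y + h₀‖ ^ (-α) ≤ (t/2) ^ (-α) :=
      Real.rpow_le_rpow_of_nonpos (by positivity) hyh (by linarith)
    have hAeq : r ^ (-α) = M ^ α * t ^ (-α) := by
      rw [hr, Real.div_rpow ht.le hM0.le, Real.rpow_neg hM0.le, div_eq_mul_inv, inv_inv]
      ring
    have hBeq : (t/2) ^ (-α) = 2 ^ α * t ^ (-α) := by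
      rw [Real.div_rpow ht.le two_pos.le, Real.rpow_neg two_pos.le, div_eq_mul_inv, inv_inv]
      ring
    have hdle : d ≤ ‖y‖ ^ (-α) - ‖y + h₀‖ ^ (-α) := by
      rw [hd]
      have := hAeq ▸ hA
      have := hBeq ▸ hB
      nlinarith [Real.rpow_pos_of_pos ht (-α)]
    exact pow_le_pow_left₀ hdpos.le hdle 2
  -- lintegral chain
  have hup0 : (∫⁻ y in {y : E2 | 0 ≤ y 0 ∧ 0 ≤ y 1 ∧ 0 < ‖y‖ ∧ ‖y‖ < ‖h₀‖ / M},
      ENNReal.ofReal ((‖y‖ ^ (-α) - ‖y + h₀‖ ^ (-α)) ^ 2))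
      ≤ ∫⁻ y in ball (0:E2) (t/M), ENNReal.ofReal (‖y‖ ^ (-(2*α))) :=
    aux_up α t M hα0 hM0 h₀ (by rw [hn0]; exact ht.le) (by rw [hn1]) (by rw [hnn])
  have hchain : ENNReal.ofReal (d ^ 2 * (a * a))
      ≤ ∫⁻ y in {y : E2 | 0 ≤ y 0 ∧ 0 ≤ y 1 ∧ 0 < ‖y‖ ∧ ‖y‖ < ‖h₀‖ / M},
        ENNReal.ofReal ((‖y‖ ^ (-α) - ‖y + h₀‖ ^ (-α)) ^ 2) := by
    calc ENNReal.ofReal (d ^ 2 * (a * a))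
        = ENNReal.ofReal (d ^ 2) * (ENNReal.ofReal a * ENNReal.ofReal a) := by
          rw [ENNReal.ofReal_mul (sq_nonneg d), ENNReal.ofReal_mul hapos.le]
      _ = ENNReal.ofReal (d ^ 2) * volume S := by rw [hS, aux_box a]
      _ = ∫⁻ _ in S, ENNReal.ofReal (d ^ 2) := (setLIntegral_const _ _).symm
      _ ≤ ∫⁻ y in S, ENNReal.ofReal ((‖y‖ ^ (-α) - ‖y + h₀‖ ^ (-α)) ^ 2) :=
          setLIntegral_mono' hSm fun y hy => ENNReal.ofReal_le_ofReal (hlow y hy)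
      _ ≤ _ := lintegral_mono_set hSsub
  -- conclude
  rw [aux_id α (‖h₀‖/M) h₀]
  have hfin2 : (∫⁻ y in {y : E2 | 0 ≤ y 0 ∧ 0 ≤ y 1 ∧ 0 < ‖y‖ ∧ ‖y‖ < ‖h₀‖ / M},
      ENNReal.ofReal ((‖y‖ ^ (-α) - ‖y + h₀‖ ^ (-α)) ^ 2)) ≠ ⊤ :=
    (lt_of_le_of_lt hup0 hKfin).ne
  have h2 : d ^ 2 * (a * a) ≤ (∫⁻ y in {y : E2 | 0 ≤ y 0 ∧ 0 ≤ y 1 ∧ 0 < ‖y‖ ∧ ‖y‖ < ‖h₀‖ / M},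
      ENNReal.ofReal ((‖y‖ ^ (-α) - ‖y + h₀‖ ^ (-α)) ^ 2)).toReal := by
    have := ENNReal.toReal_mono hfin2 hchain
    rwa [ENNReal.toReal_ofReal (by positivity)] at this
  have h3 : d * a ≤ Real.sqrt (∫⁻ y in {y : E2 | 0 ≤ y 0 ∧ 0 ≤ y 1 ∧ 0 < ‖y‖ ∧ ‖y‖ < ‖h₀‖ / M},
      ENNReal.ofReal ((‖y‖ ^ (-α) - ‖y + h₀‖ ^ (-α)) ^ 2)).toReal := by
    calc d * a = Real.sqrt ((d * a) ^ 2) := (Real.sqrt_sq (by positivity)).symm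
      _ ≤ _ := Real.sqrt_le_sqrt (by nlinarith)
  refine le_trans (le_of_eq ?_) h3
  rw [hd, ha, hr, hc, show (1:ℝ) - α = 1 + -α by ring, Real.rpow_add ht, Real.rpow_one]
  field_simp
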